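/- Let X be a finite set with |X| = K ≥ 1, let T be a positive integer, and for each t ∈ {1,…,T} let x_t ∈ X and let m_t be a positive integer with m_t ≤ T. Suppose that for every x ∈ X and every integer i ≥ 0, the number of indices t ∈ {1,…,T} with x_t = x and 2^i ≤ m_t ≤ 2^{i+1} − 1 is at most 2^i. Then ∑_{t=1}^T 1/m_t ≤ K·(⌊log₂ T⌋ + 1). -/
import Mathlib


open Finset

/-- Dyadic counting lemma: if each label `x ∈ X` (with `|X| = K`) appears at
most `2^i` times among indices `t` whose count value `m_t` lies in the dyadic
block `[2^i, 2^{i+1} − 1]`, then `∑_{t=1}^T 1/m_t ≤ K(⌊log₂ T⌋ + 1)`. -/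
theorem dyadic_inverse_count_sum
    {X : Type*} [Fintype X] [DecidableEq X] (K : ℕ) (hK : Fintype.card X = K)
    (hK1 : 1 ≤ K) (T : ℕ) (hT : 1 ≤ T)
    (x : ℕ → X) (m : ℕ → ℕ)
    (hm : ∀ t ∈ Finset.Icc 1 T, 1 ≤ m t ∧ m t ≤ T)
    (hcount : ∀ x₀ : X, ∀ i : ℕ,
      ((Finset.Icc 1 T).filter
        (fun t => x t = x₀ ∧ 2 ^ i ≤ m t ∧ m t ≤ 2 ^ (i + 1) - 1)).card ≤ 2 ^ i) :
    ∑ t ∈ Finset.Icc 1 T, (1 : ℝ) / m t ≤ K * (Nat.log 2 T + 1) := by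
  set L := Nat.log 2 T with hL
  have key : ∑ t ∈ Finset.Icc 1 T, (1 : ℝ) / m t
      = ∑ p ∈ (Finset.univ : Finset X) ×ˢ Finset.range (L + 1),
          ∑ t ∈ (Finset.Icc 1 T).filter
            (fun t => (x t, Nat.log 2 (m t)) = p), (1 : ℝ) / m t := by
    rw [Finset.sum_fiberwise_of_maps_to]
    intro t ht
    simp only [Finset.mem_product, Finset.mem_univ, Finset.mem_range, true_and]
    exact Nat.lt_succ_of_le (Nat.log_mono_right (hm t ht).2)
  rw [key]
  have hbound : ∀ p ∈ (Finset.univ : Finset X) ×ˢ Finset.range (L + 1),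
      ∑ t ∈ (Finset.Icc 1 T).filter
        (fun t => (x t, Nat.log 2 (m t)) = p), (1 : ℝ) / m t ≤ 1 := by
    rintro ⟨x₀, i⟩ _
    have hsub : (Finset.Icc 1 T).filter (fun t => (x t, Nat.log 2 (m t)) = (x₀, i)) ⊆
        (Finset.Icc 1 T).filter
          (fun t => x t = x₀ ∧ 2 ^ i ≤ m t ∧ m t ≤ 2 ^ (i + 1) - 1) := by
      intro t ht
      simp only [Finset.mem_filter, Prod.mk.injEq] at ht ⊢
      obtain ⟨htT, hx, hi⟩ := ht
      have hm1 := (hm t htT).1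
      subst hi
      refine ⟨htT, hx, Nat.pow_log_le_self 2 (by omega), ?_⟩
      have := Nat.lt_pow_succ_log_self (by norm_num : 1 < 2) (m t)
      omega
    have hcard : ((Finset.Icc 1 T).filter
        (fun t => (x t, Nat.log 2 (m t)) = (x₀, i))).card ≤ 2 ^ i :=
      (Finset.card_le_card hsub).trans (hcount x₀ i)
    calc ∑ t ∈ (Finset.Icc 1 T).filter
            (fun t => (x t, Nat.log 2 (m t)) = (x₀, i)), (1 : ℝ) / m t
        ≤ ∑ t ∈ (Finset.Icc 1 T).filter
            (fun t => (x t, Nat.log 2 (m t)) = (x₀, i)), (1 : ℝ) / 2 ^ i := by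
          apply Finset.sum_le_sum
          intro t ht
          simp only [Finset.mem_filter, Prod.mk.injEq] at ht
          obtain ⟨htT, hx, hi⟩ := ht
          have hm1 := (hm t htT).1
          apply one_div_le_one_div_of_le (by positivity)
          rw [← hi]
          exact_mod_cast Nat.pow_log_le_self 2 (by omega)
      _ ≤ (2 ^ i : ℝ) * ((1 : ℝ) / 2 ^ i) := by
          rw [Finset.sum_const, nsmul_eq_mul]
          apply mul_le_mul_of_nonneg_right _ (by positivity)
          exact_mod_cast hcard
      _ = 1 := by field_simp
  calc ∑ p ∈ (Finset.univ : Finset X) ×ˢ Finset.range (L + 1),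
        ∑ t ∈ (Finset.Icc 1 T).filter
          (fun t => (x t, Nat.log 2 (m t)) = p), (1 : ℝ) / m t
      ≤ ∑ _p ∈ (Finset.univ : Finset X) ×ˢ Finset.range (L + 1), (1 : ℝ) :=
        Finset.sum_le_sum hbound
    _ = K * (L + 1) := by
        rw [Finset.sum_const, nsmul_eq_mul, mul_one, Finset.card_product,
          Finset.card_univ, Finset.card_range, hK]
        push_cast
        ring
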